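/- Let P be a poset in which every closed interval is finite and let ~ be an equivalence relation on Int(P) satisfying Axiom 1 (order-compatibility) and Axiom 2 part (a) (existence of the intertwining maps τ). Then the reduced incidence algebra k[P]_red over a field k, with multiplication ξ_{[x,y]~}·ξ_{[z,w]~} = ξ_{[x',w']~} if there exist x' ≤ y' ≤ w' with [x',y']~[x,y] and [y',w']~[z,w] and 0 otherwise, is an associative k-algebra. -/

import Mathlib

noncomputable section
/-! ### Posets, intervals, and equivalence relations on intervals -/

/-- The set of closed intervals `[x, y]` of a poset `P`, encoded as pairs `x ≤ y`. -/
abbrev IntP (P : Type) [PartialOrder P] : Type := {p : P × P // p.1 ≤ p.2}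

/-- The closed interval `[x, y]` as an element of `IntP P`. -/
def itv {P : Type} [PartialOrder P] (x y : P) (h : x ≤ y) : IntP P := ⟨(x, y), h⟩

section PosetRel

variable {P : Type} [PartialOrder P]

/-- The interval map `int_{[x,y]}` sending `z ∈ [x, y]` to the pair of `∼`-classes
`([x,z]∼, [z,y]∼)`. -/
def intMap (S : Setoid (IntP P)) {x y : P} (z : Set.Icc x y) :
    Quotient S × Quotient S :=
  (Quotient.mk S (itv x (z : P) z.2.1), Quotient.mk S (itv (z : P) y z.2.2))

/-- Axiom 1 (order-compatibility): if `[x,y] ∼ [x',y']` and `[y,z] ∼ [y',z']`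
then `[x,z] ∼ [x',z']`. -/
def Ax1 (S : Setoid (IntP P)) : Prop :=
  ∀ (x y z x' y' z' : P) (hxy : x ≤ y) (hyz : y ≤ z) (hxy' : x' ≤ y') (hyz' : y' ≤ z'),
    S.r (itv x y hxy) (itv x' y' hxy') → S.r (itv y z hyz) (itv y' z' hyz') →
    S.r (itv x z (hxy.trans hyz)) (itv x' z' (hxy'.trans hyz'))

/-- Axiom 2, part (a) (invariance, existence): whenever `[x,y] ∼ [x',y']` there is a
map `τ : [x,y] → [x',y']` commuting with the interval maps. -/
def Ax2a (S : Setoid (IntP P)) : Prop :=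
  ∀ (x y x' y' : P) (h : x ≤ y) (h' : x' ≤ y'),
    S.r (itv x y h) (itv x' y' h') →
    ∃ τ : Set.Icc x y → Set.Icc x' y', ∀ z, intMap S (τ z) = intMap S z

/-- Axiom 2 (invariance, existence and uniqueness): whenever `[x,y] ∼ [x',y']` there is a
unique map `τ : [x,y] → [x',y']` commuting with the interval maps. -/
def Ax2 (S : Setoid (IntP P)) : Prop :=
  ∀ (x y x' y' : P) (h : x ≤ y) (h' : x' ≤ y'),
    S.r (itv x y h) (itv x' y' h') →
    ∃! τ : Set.Icc x y → Set.Icc x' y', ∀ z, intMap S (τ z) = intMap S z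

/-- The class of the one-point interval `[x,x]`. -/
def diagCl (S : Setoid (IntP P)) (x : P) : Quotient S := Quotient.mk S (itv x x le_rfl)

/-- The diagonal classes, i.e. classes of one-point intervals. -/
def IsDiag (S : Setoid (IntP P)) (α : Quotient S) : Prop := ∃ x : P, α = diagCl S x

/-- Axiom 3 (finiteness): the induced equivalence relation on points
(`x ∼ y` iff `[x,x] ∼ [y,y]`) has only finitely many classes. -/
def Ax3 (S : Setoid (IntP P)) : Prop := {α : Quotient S | IsDiag S α}.Finite

/-- Axiom 4 (concatenation): if `x ≤ y₁` and `y₂ ≤ z` with `y₁ ∼ y₂`, then there are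
`x' ≤ y' ≤ z'` with `[x',y'] ∼ [x,y₁]` and `[y',z'] ∼ [y₂,z]`. -/
def Ax4 (S : Setoid (IntP P)) : Prop :=
  ∀ (x y₁ y₂ z : P) (h1 : x ≤ y₁) (h2 : y₂ ≤ z),
    S.r (itv y₁ y₁ le_rfl) (itv y₂ y₂ le_rfl) →
    ∃ (x' y' z' : P) (hxy : x' ≤ y') (hyz : y' ≤ z'),
      S.r (itv x' y' hxy) (itv x y₁ h1) ∧ S.r (itv y' z' hyz) (itv y₂ z h2)

/-- The source of a class `α = [x,y]∼`, namely the diagonal class `[x,x]∼`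
(well defined under Axioms 1 and 2; here defined via a chosen representative). -/
noncomputable def sclP (S : Setoid (IntP P)) (α : Quotient S) : Quotient S :=
  diagCl S α.out.val.1

/-- The target of a class `α = [x,y]∼`, namely the diagonal class `[y,y]∼`
(well defined under Axioms 1 and 2; here defined via a chosen representative). -/
noncomputable def tclP (S : Setoid (IntP P)) (α : Quotient S) : Quotient S :=
  diagCl S α.out.val.2

/-- The length of the interval `[x, y]`: the length of a longest chain from `x` to `y`. -/
noncomputable def intLen (x y : P) : ℕ :=
  sSup {n | ∃ c : Finset P, (c : Set P) ⊆ Set.Icc x y ∧ IsChain (· ≤ ·) (c : Set P) ∧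
    x ∈ c ∧ y ∈ c ∧ c.card = n + 1}

/-- The length of a class of intervals (via a chosen representative; well defined
under Axioms 1 and 2). -/
noncomputable def lenCl (S : Setoid (IntP P)) (α : Quotient S) : ℕ :=
  intLen α.out.val.1 α.out.val.2

/-- The multiplication rule of the reduced incidence algebra `k[P]_red`, for a family
`ξ` of elements indexed by `Int(P)/∼` (in the intended application, a basis):
`ξ_{[x,y]∼} ξ_{[z,w]∼} = ξ_{[x',w']∼}` if there exist `x' ≤ y' ≤ w'` with
`[x',y'] ∼ [x,y]` and `[y',w'] ∼ [z,w]`, and `0` otherwise. -/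
def MulRuleA {A : Type} [Ring A] (S : Setoid (IntP P)) (ξ : Quotient S → A) : Prop :=
  ∀ α β : Quotient S,
    (∀ (x y w : P) (h1 : x ≤ y) (h2 : y ≤ w),
        α = Quotient.mk S (itv x y h1) → β = Quotient.mk S (itv y w h2) →
        ξ α * ξ β = ξ (Quotient.mk S (itv x w (h1.trans h2)))) ∧
    ((¬ ∃ (x y w : P) (h1 : x ≤ y) (h2 : y ≤ w),
        α = Quotient.mk S (itv x y h1) ∧ β = Quotient.mk S (itv y w h2)) →
      ξ α * ξ β = 0)

/-- The multiplication rule of the associated graded ring `gr_I k[P]_red`, for a family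
`ξ` of elements indexed by `Int(P)/∼` (in the intended application, a basis):
as for `k[P]_red`, but with the additional requirement that lengths add up. -/
def MulRuleR {A : Type} [Ring A] (S : Setoid (IntP P)) (ξ : Quotient S → A) : Prop :=
  ∀ α β : Quotient S,
    (∀ (x y w : P) (h1 : x ≤ y) (h2 : y ≤ w),
        α = Quotient.mk S (itv x y h1) → β = Quotient.mk S (itv y w h2) →
        intLen x w = intLen x y + intLen y w →
        ξ α * ξ β = ξ (Quotient.mk S (itv x w (h1.trans h2)))) ∧
    ((¬ ∃ (x y w : P) (h1 : x ≤ y) (h2 : y ≤ w),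
        α = Quotient.mk S (itv x y h1) ∧ β = Quotient.mk S (itv y w h2) ∧
        intLen x w = intLen x y + intLen y w) →
      ξ α * ξ β = 0)

/-- The poset `(x, y)|_J`: elements `z` of the open interval `(x, y)` such that the
class of `[x, z]` lies in the monomial ideal (set of classes) `J`. -/
def subJ (S : Setoid (IntP P)) (Jset : Set (Quotient S)) (x y : P) : Set P :=
  {z : P | ∃ hz : x < z ∧ z < y, Quotient.mk S (itv x z hz.1.le) ∈ Jset}

end PosetRel
/-!
STATEMENT 5: For a poset `P` with finite closed intervals and an equivalence relation
`∼` on `Int(P)` satisfying Axiom 1 (order-compatibility) and Axiom 2(a) (existence of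
the intertwining maps `τ`), the reduced incidence algebra `k[P]_red` — the free
`k`-module on `Int(P)/∼` with the incidence multiplication rule — is associative.
-/
theorem reduced_incidence_algebra_associative
    (P : Type) [PartialOrder P] (hIcc : ∀ x y : P, (Set.Icc x y).Finite)
    (S : Setoid (IntP P)) (hax1 : Ax1 S) (hax2a : Ax2a S)
    (k : Type) [Field k]
    (mul : (Quotient S →₀ k) →ₗ[k] (Quotient S →₀ k) →ₗ[k] (Quotient S →₀ k))
    (hrule : ∀ α β : Quotient S,
      (∀ (x y w : P) (h1 : x ≤ y) (h2 : y ≤ w),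
          α = Quotient.mk S (itv x y h1) → β = Quotient.mk S (itv y w h2) →
          mul (Finsupp.single α 1) (Finsupp.single β 1) =
            Finsupp.single (Quotient.mk S (itv x w (h1.trans h2))) 1) ∧
      ((¬ ∃ (x y w : P) (h1 : x ≤ y) (h2 : y ≤ w),
          α = Quotient.mk S (itv x y h1) ∧ β = Quotient.mk S (itv y w h2)) →
        mul (Finsupp.single α 1) (Finsupp.single β 1) = 0)) :
    ∀ a b c : Quotient S →₀ k, mul (mul a b) c = mul a (mul b c) := by
  -- Key claim: associativity on basis elements.
  have key : ∀ α β γ : Quotient S,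
      mul (mul (Finsupp.single α 1) (Finsupp.single β 1)) (Finsupp.single γ 1) =
      mul (Finsupp.single α 1) (mul (Finsupp.single β 1) (Finsupp.single γ 1)) := by
    intro α β γ
    by_cases hT : ∃ (x y z w : P) (h1 : x ≤ y) (h2 : y ≤ z) (h3 : z ≤ w),
        α = Quotient.mk S (itv x y h1) ∧ β = Quotient.mk S (itv y z h2) ∧
        γ = Quotient.mk S (itv z w h3)
    · obtain ⟨x, y, z, w, h1, h2, h3, hα, hβ, hγ⟩ := hT
      rw [(hrule α β).1 x y z h1 h2 hα hβ,
        (hrule (Quotient.mk S (itv x z (h1.trans h2))) γ).1 x z w (h1.trans h2) h3 rfl hγ,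
        (hrule β γ).1 y z w h2 h3 hβ hγ,
        (hrule α (Quotient.mk S (itv y w (h2.trans h3)))).1 x y w h1 (h2.trans h3) hα rfl]
    · -- both sides are zero
      have hL : mul (mul (Finsupp.single α 1) (Finsupp.single β 1)) (Finsupp.single γ 1) = 0 := by
        by_cases hAB : ∃ (x y z : P) (h1 : x ≤ y) (h2 : y ≤ z),
            α = Quotient.mk S (itv x y h1) ∧ β = Quotient.mk S (itv y z h2)
        · obtain ⟨x, y, z, h1, h2, hα, hβ⟩ := hAB
          rw [(hrule α β).1 x y z h1 h2 hα hβ]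
          apply (hrule (Quotient.mk S (itv x z (h1.trans h2))) γ).2
          rintro ⟨x', z', w, h1', h3', hxz, hγ⟩
          have hr : S.r (itv x z (h1.trans h2)) (itv x' z' h1') := Quotient.exact hxz
          obtain ⟨τ, hτ⟩ := hax2a x z x' z' (h1.trans h2) h1' hr
          set y' : Set.Icc x' z' := τ ⟨y, h1, h2⟩ with hy'
          have hmaps := hτ ⟨y, h1, h2⟩
          have e1 : Quotient.mk S (itv x' (y' : P) y'.2.1) = Quotient.mk S (itv x y h1) :=
            congrArg Prod.fst hmaps
          have e2 : Quotient.mk S (itv (y' : P) z' y'.2.2) = Quotient.mk S (itv y z h2) :=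
            congrArg Prod.snd hmaps
          exact hT ⟨x', y', z', w, y'.2.1, y'.2.2, h3', hα.trans e1.symm,
            hβ.trans e2.symm, hγ⟩
        · rw [(hrule α β).2 hAB]
          simp
      have hR : mul (Finsupp.single α 1) (mul (Finsupp.single β 1) (Finsupp.single γ 1)) = 0 := by
        by_cases hBC : ∃ (y z w : P) (h2 : y ≤ z) (h3 : z ≤ w),
            β = Quotient.mk S (itv y z h2) ∧ γ = Quotient.mk S (itv z w h3)
        · obtain ⟨y, z, w, h2, h3, hβ, hγ⟩ := hBC
          rw [(hrule β γ).1 y z w h2 h3 hβ hγ]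
          apply (hrule α (Quotient.mk S (itv y w (h2.trans h3)))).2
          rintro ⟨x, y', w', h1', h4', hα, hyw⟩
          have hr : S.r (itv y w (h2.trans h3)) (itv y' w' h4') := Quotient.exact hyw
          obtain ⟨τ, hτ⟩ := hax2a y w y' w' (h2.trans h3) h4' hr
          set z' : Set.Icc y' w' := τ ⟨z, h2, h3⟩ with hz'
          have hmaps := hτ ⟨z, h2, h3⟩
          have e1 : Quotient.mk S (itv y' (z' : P) z'.2.1) = Quotient.mk S (itv y z h2) :=
            congrArg Prod.fst hmaps
          have e2 : Quotient.mk S (itv (z' : P) w' z'.2.2) = Quotient.mk S (itv z w h3) :=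
            congrArg Prod.snd hmaps
          exact hT ⟨x, y', z', w', h1', z'.2.1, z'.2.2, hα,
            hβ.trans e1.symm, hγ.trans e2.symm⟩
        · rw [(hrule β γ).2 hBC]
          simp
      rw [hL, hR]
  -- Reduce to basis elements by multilinearity.
  intro a b c
  induction a using Finsupp.induction_linear with
  | zero => simp
  | add f g hf hg => simp only [map_add, LinearMap.add_apply, hf, hg]
  | single α r =>
    induction b using Finsupp.induction_linear with
    | zero => simp
    | add f g hf hg => simp only [map_add, LinearMap.add_apply, map_add, hf, hg]
    | single β s =>
      induction c using Finsupp.induction_linear with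
      | zero => simp
      | add f g hf hg => simp only [map_add, hf, hg]
      | single γ t =>
        have ha : Finsupp.single α r = r • Finsupp.single α (1 : k) := by
          rw [Finsupp.smul_single, smul_eq_mul, mul_one]
        have hb : Finsupp.single β s = s • Finsupp.single β (1 : k) := by
          rw [Finsupp.smul_single, smul_eq_mul, mul_one]
        have hc : Finsupp.single γ t = t • Finsupp.single γ (1 : k) := by
          rw [Finsupp.smul_single, smul_eq_mul, mul_one]
        rw [ha, hb, hc]
        simp only [map_smul, LinearMap.smul_apply, map_smul, key α β γ]
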